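/- arXiv:1808.00658 — 2 statements merged into one kernel-verified Lean document; each statement's English description precedes it below -/
import Mathlib

section
/- The span of the Zernike polynomials {ζ_{mn} : m ∈ ℤ, n ≥ 0} is dense in L²(D), for D the open unit disc; equivalently, {ζ_{mn}} forms an orthonormal Hilbert basis of L²(D). -/
open MeasureTheory Complex

set_option maxHeartbeats 1000000

open scoped ENNReal NNReal

lemma span_top_of_degree_eq (p : ℕ → Polynomial ℝ) (h : ∀ n, (p n).degree = (n : ℕ)) :
    ∀ q : Polynomial ℝ, q ∈ Submodule.span ℝ (Set.range p) := by
  have key : ∀ d : ℕ, ∀ q : Polynomial ℝ, q.natDegree < d → q ∈ Submodule.span ℝ (Set.range p) := by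
    intro d
    induction d with
    | zero => exact fun q hq => absurd hq (Nat.not_lt_zero _)
    | succ d ih =>
      intro q hq
      by_cases h0 : q = 0
      · simp [h0]
      set n := q.natDegree with hn
      have hpn0 : p n ≠ 0 := by
        intro hc
        have := h n
        rw [hc, Polynomial.degree_zero] at this
        exact absurd this.symm (by simp)
      have hlc : (p n).leadingCoeff ≠ 0 := Polynomial.leadingCoeff_ne_zero.2 hpn0
      set c : ℝ := q.leadingCoeff / (p n).leadingCoeff with hc
      have hc0 : c ≠ 0 := div_ne_zero (Polynomial.leadingCoeff_ne_zero.2 h0) hlc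
      have hcp : c • p n = Polynomial.C c * p n := by rw [Polynomial.smul_eq_C_mul]
      have hdegc : (c • p n).degree = q.degree := by
        rw [hcp, Polynomial.degree_C_mul (by exact hc0), h n, Polynomial.degree_eq_natDegree h0]
      have hlcc : q.leadingCoeff = (c • p n).leadingCoeff := by
        rw [hcp, Polynomial.leadingCoeff_mul, Polynomial.leadingCoeff_C, hc,
          div_mul_cancel₀ _ hlc]
      by_cases hr0 : q - c • p n = 0
      · have : q = c • p n := by linear_combination (norm := module) hr0
        rw [this]
        exact Submodule.smul_mem _ _ (Submodule.subset_span ⟨n, rfl⟩)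
      · have hdlt : (q - c • p n).degree < q.degree :=
          Polynomial.degree_sub_lt hdegc.symm h0 hlcc
        have hnd : (q - c • p n).natDegree < n :=
          Polynomial.natDegree_lt_natDegree hr0 hdlt
        have hmem : q - c • p n ∈ Submodule.span ℝ (Set.range p) :=
          ih _ (lt_of_lt_of_le hnd (Nat.lt_succ_iff.mp hq))
        have : q = (q - c • p n) + c • p n := by ring
        rw [this]
        exact Submodule.add_mem _ hmem (Submodule.smul_mem _ _ (Submodule.subset_span ⟨n, rfl⟩))
  exact fun q => key (q.natDegree + 1) q (Nat.lt_succ_self _)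

lemma mono_mem_span_zeta
    (P : ℕ → ℕ → ℝ → ℝ)
    (hPpoly : ∀ (n k : ℕ), ∃ p : Polynomial ℝ, p.degree = n ∧ ∀ x, P n k x = p.eval x)
    (ζ : ℤ × ℕ → ℂ → ℂ)
    (hζ : ∀ (m : ℤ) (n : ℕ) (z : ℂ), ζ (m, n) z =
      (Real.sqrt (1 + m.natAbs + 2 * n) : ℂ) * (P n m.natAbs (2 * ‖z‖ ^ 2 - 1) : ℂ)
        * (if 0 ≤ m then z ^ m.natAbs else (starRingEnd ℂ z) ^ m.natAbs))
    (hspan : ∀ (p : ℕ → Polynomial ℝ), (∀ n, (p n).degree = (n : ℕ)) →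
      ∀ q : Polynomial ℝ, q ∈ Submodule.span ℝ (Set.range p))
    (a b : ℕ) :
    (fun z : ℂ => z ^ a * (starRingEnd ℂ z) ^ b) ∈ Submodule.span ℂ (Set.range ζ) := by
  set m : ℤ := (a : ℤ) - b with hm
  set k : ℕ := m.natAbs with hk
  set j : ℕ := min a b with hj
  -- the polynomials realizing P · k
  let pk : ℕ → Polynomial ℝ := fun n => (hPpoly n k).choose
  have hdeg : ∀ n, (pk n).degree = (n : ℕ) := fun n => (hPpoly n k).choose_spec.1
  have heval : ∀ n x, P n k x = (pk n).eval x := fun n => (hPpoly n k).choose_spec.2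
  -- the linear map from polynomials to functions
  let Φ : ℂ → ℂ := fun z => if 0 ≤ m then z ^ k else (starRingEnd ℂ z) ^ k
  let L : Polynomial ℝ →ₗ[ℝ] (ℂ → ℂ) :=
    { toFun := fun q => fun z => ((q.eval (2 * ‖z‖ ^ 2 - 1) : ℝ) : ℂ) * Φ z
      map_add' := by
        intro q r
        funext z
        simp only [Polynomial.eval_add, Pi.add_apply, Complex.ofReal_add]
        ring
      map_smul' := by
        intro c q
        funext z
        simp only [Polynomial.eval_smul, smul_eq_mul, Pi.smul_apply, RingHom.id_apply,
          Complex.ofReal_mul, Complex.real_smul]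
        ring }
  set S : Submodule ℝ (ℂ → ℂ) :=
    (Submodule.span ℂ (Set.range ζ)).restrictScalars ℝ with hS
  have hbase : ∀ n : ℕ, L (pk n) ∈ S := by
    intro n
    have hμ : (0 : ℝ) < Real.sqrt (1 + k + 2 * n) := by
      apply Real.sqrt_pos.2; positivity
    have hζeq : ζ (m, n) = (Real.sqrt (1 + k + 2 * n) : ℂ) • L (pk n) := by
      funext z
      simp only [hζ m n z, Pi.smul_apply, smul_eq_mul, L, LinearMap.coe_mk, AddHom.coe_mk,
        ← heval, ← hk]
      ring
    have : L (pk n) = ((Real.sqrt (1 + k + 2 * n) : ℂ))⁻¹ • ζ (m, n) := by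
      rw [hζeq, smul_smul, inv_mul_cancel₀ (by exact_mod_cast hμ.ne'), one_smul]
    rw [hS, Submodule.restrictScalars_mem, this]
    exact Submodule.smul_mem _ _ (Submodule.subset_span ⟨(m, n), rfl⟩)
  have hall : ∀ q : Polynomial ℝ, L q ∈ S := by
    intro q
    have hq : q ∈ Submodule.span ℝ (Set.range pk) := hspan pk hdeg q
    have hle : Submodule.span ℝ (Set.range pk) ≤ S.comap L := by
      rw [Submodule.span_le]
      rintro _ ⟨n, rfl⟩
      exact hbase n
    exact hle hq
  -- choose q = ((X+1)/2)^j
  have := hall ((Polynomial.C (1/2 : ℝ) * (Polynomial.X + 1)) ^ j)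
  rw [hS, Submodule.restrictScalars_mem] at this
  convert this using 1
  funext z
  simp only [L, LinearMap.coe_mk, AddHom.coe_mk, Polynomial.eval_pow, Polynomial.eval_mul,
    Polynomial.eval_C, Polynomial.eval_add, Polynomial.eval_X, Polynomial.eval_one]
  have habs : ((1 / 2 : ℝ) * (2 * ‖z‖ ^ 2 - 1 + 1) : ℝ) = ‖z‖ ^ 2 := by ring
  rw [habs]
  have hzz : ((‖z‖ : ℂ)) ^ 2 = z * (starRingEnd ℂ z) := by
    rw [Complex.mul_conj, Complex.normSq_eq_norm_sq]
    push_cast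
    ring
  push_cast
  rw [hzz]
  rcases le_total b a with hba | hab
  · obtain ⟨d, rfl⟩ : ∃ d, a = b + d := ⟨a - b, by omega⟩
    have hkd : k = d := by omega
    have hjb : j = b := by omega
    have h0m : 0 ≤ m := by omega
    simp only [Φ, if_pos h0m, hkd, hjb]
    rw [pow_add]
    ring
  · obtain ⟨d, rfl⟩ : ∃ d, b = a + d := ⟨b - a, by omega⟩
    have hkd : k = d := by omega
    have hja : j = a := by omega
    have hΦ : Φ z = (starRingEnd ℂ z) ^ d := by
      by_cases h0 : 0 ≤ m
      · have hd0 : d = 0 := by omega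
        simp [Φ, if_pos h0, hkd, hd0]
      · simp [Φ, if_neg h0, hkd]
    rw [hΦ, hja, pow_add]
    ring

lemma zeta_continuous
    (P : ℕ → ℕ → ℝ → ℝ)
    (hPpoly : ∀ (n k : ℕ), ∃ p : Polynomial ℝ, p.degree = n ∧ ∀ x, P n k x = p.eval x)
    (ζ : ℤ × ℕ → ℂ → ℂ)
    (hζ : ∀ (m : ℤ) (n : ℕ) (z : ℂ), ζ (m, n) z =
      (Real.sqrt (1 + m.natAbs + 2 * n) : ℂ) * (P n m.natAbs (2 * ‖z‖ ^ 2 - 1) : ℂ)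
        * (if 0 ≤ m then z ^ m.natAbs else (starRingEnd ℂ z) ^ m.natAbs))
    (p : ℤ × ℕ) : Continuous (ζ p) := by
  obtain ⟨m, n⟩ := p
  obtain ⟨q, -, hq⟩ := hPpoly n m.natAbs
  have hfun : ζ (m, n) = fun z =>
      (Real.sqrt (1 + m.natAbs + 2 * n) : ℂ) * ((q.eval (2 * ‖z‖ ^ 2 - 1) : ℝ) : ℂ)
        * (if 0 ≤ m then z ^ m.natAbs else (starRingEnd ℂ z) ^ m.natAbs) := by
    funext z
    rw [hζ, hq]
  rw [hfun]
  have h1 : Continuous fun z : ℂ => ((q.eval (2 * ‖z‖ ^ 2 - 1) : ℝ) : ℂ) := by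
    apply Complex.continuous_ofReal.comp
    exact q.continuous.comp (by continuity)
  by_cases h0 : 0 ≤ m
  · simp only [if_pos h0]
    exact (continuous_const.mul h1).mul (continuous_pow _)
  · simp only [if_neg h0]
    exact (continuous_const.mul h1).mul ((Complex.continuous_conj).pow _)

lemma approx_on_closedBall
    (ζ : ℤ × ℕ → ℂ → ℂ)
    (hmono : ∀ a b : ℕ,
      (fun z : ℂ => z ^ a * (starRingEnd ℂ z) ^ b) ∈ Submodule.span ℂ (Set.range ζ))
    (gc : C((Metric.closedBall (0:ℂ) 1 : Set ℂ), ℂ)) (δ : ℝ) (hδ : 0 < δ) :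
    ∃ H : ℂ → ℂ, H ∈ Submodule.span ℂ (Set.range ζ) ∧
      ∀ z : (Metric.closedBall (0:ℂ) 1 : Set ℂ), ‖gc z - H z‖ ≤ δ := by
  haveI : CompactSpace (Metric.closedBall (0:ℂ) 1 : Set ℂ) :=
    isCompact_iff_compactSpace.mp (isCompact_closedBall (0:ℂ) 1)
  set monoSet : Set (ℂ → ℂ) :=
    {f : ℂ → ℂ | ∃ a b : ℕ, f = fun z => z ^ a * (starRingEnd ℂ z) ^ b} with hmonoSet
  set Mono : Submodule ℂ (ℂ → ℂ) := Submodule.span ℂ monoSet with hMono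
  have hMonoζ : Mono ≤ Submodule.span ℂ (Set.range ζ) := by
    rw [hMono, Submodule.span_le]
    rintro f ⟨a, b, rfl⟩
    exact hmono a b
  have hMul : ∀ F ∈ Mono, ∀ G ∈ Mono, F * G ∈ Mono := by
    have hle : Mono * Mono ≤ Mono := by
      rw [hMono, Submodule.span_mul_span]
      rw [Submodule.span_le]
      rintro x ⟨f, ⟨a, b, rfl⟩, g, ⟨a', b', rfl⟩, rfl⟩
      apply Submodule.subset_span
      refine ⟨a + a', b + b', ?_⟩
      funext z
      simp only [Pi.mul_apply, pow_add]
      ring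
    exact fun F hF G hG => hle (Submodule.mul_mem_mul hF hG)
  -- exact representation of elements of the star closure
  have hrep : ∀ h ∈ (polynomialFunctions (Metric.closedBall (0:ℂ) 1 : Set ℂ)).starClosure,
      ∃ H ∈ Mono, ∀ z : (Metric.closedBall (0:ℂ) 1 : Set ℂ), h z = H (z : ℂ) := by
    intro h hh
    rw [polynomialFunctions.starClosure_eq_adjoin_X] at hh
    induction hh using Algebra.adjoin_induction with
    | mem f hf =>
      simp only [Set.mem_union, Set.mem_singleton_iff, Set.mem_star] at hf
      rw [star_eq_iff_star_eq, eq_comm (b := f)] at hf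
      obtain (rfl | rfl) := hf
      · refine ⟨fun z => z ^ 1 * (starRingEnd ℂ z) ^ 0, Submodule.subset_span ⟨1, 0, rfl⟩, ?_⟩
        intro z
        simp [Polynomial.toContinuousMapOnAlgHom_apply, Polynomial.toContinuousMapOn_apply,
          Polynomial.toContinuousMap_apply]
      · refine ⟨fun z => z ^ 0 * (starRingEnd ℂ z) ^ 1, Submodule.subset_span ⟨0, 1, rfl⟩, ?_⟩
        intro z
        simp [Polynomial.toContinuousMapOnAlgHom_apply, Polynomial.toContinuousMapOn_apply,
          Polynomial.toContinuousMap_apply]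
    | algebraMap r =>
      refine ⟨r • fun z => z ^ 0 * (starRingEnd ℂ z) ^ 0,
        Submodule.smul_mem _ _ (Submodule.subset_span ⟨0, 0, rfl⟩), ?_⟩
      intro z
      simp
    | add f g hf hg hf' hg' =>
      obtain ⟨F, hFM, hF⟩ := hf'
      obtain ⟨G, hGM, hG⟩ := hg'
      exact ⟨F + G, Submodule.add_mem _ hFM hGM, fun z => by
        simp [ContinuousMap.add_apply, hF z, hG z]⟩
    | mul f g hf hg hf' hg' =>
      obtain ⟨F, hFM, hF⟩ := hf'
      obtain ⟨G, hGM, hG⟩ := hg'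
      exact ⟨F * G, hMul F hFM G hGM, fun z => by
        simp [ContinuousMap.mul_apply, hF z, hG z]⟩
  -- density
  have hg : gc ∈ closure ((polynomialFunctions (Metric.closedBall (0:ℂ) 1 : Set ℂ)).starClosure : Set C((Metric.closedBall (0:ℂ) 1 : Set ℂ), ℂ)) := by
    rw [← StarSubalgebra.topologicalClosure_coe, polynomialFunctions.starClosure_topologicalClosure (Metric.closedBall (0:ℂ) 1 : Set ℂ)]
    simp
  obtain ⟨h, hh, hdist⟩ := Metric.mem_closure_iff.mp hg δ hδ
  obtain ⟨H, hHM, hHeq⟩ := hrep h hh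
  refine ⟨H, hMonoζ hHM, fun z => ?_⟩
  rw [← hHeq z]
  calc ‖gc z - h z‖ = dist (gc z) (h z) := (dist_eq_norm _ _).symm
    _ ≤ dist gc h := ContinuousMap.dist_apply_le_dist z
    _ ≤ δ := hdist.le

lemma zernike_orthonormal
    (P : ℕ → ℕ → ℝ → ℝ)
    (hPpoly : ∀ (n k : ℕ), ∃ p : Polynomial ℝ, p.degree = n ∧ ∀ x, P n k x = p.eval x)
    (hPorth : ∀ (k n₁ n₂ : ℕ),
      (∫ ξ in (-1:ℝ)..1, P n₁ k ξ * P n₂ k ξ * (1 + ξ) ^ k)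
        = if n₁ = n₂ then 2 ^ (k+1) / (1 + (k:ℝ) + 2 * n₁) else 0)
    (ζ : ℤ × ℕ → ℂ → ℂ)
    (hζ : ∀ (m : ℤ) (n : ℕ) (z : ℂ), ζ (m, n) z =
      (Real.sqrt (1 + m.natAbs + 2 * n) : ℂ) * (P n m.natAbs (2 * ‖z‖ ^ 2 - 1) : ℂ)
        * (if 0 ≤ m then z ^ m.natAbs else (starRingEnd ℂ z) ^ m.natAbs))
    (p q : ℤ × ℕ) :
    (1 / (Real.pi : ℂ)) * ∫ z in Metric.ball (0:ℂ) 1, (starRingEnd ℂ) (ζ p z) * ζ q z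
      = if p = q then 1 else 0 := by
  obtain ⟨m₁, n₁⟩ := p
  obtain ⟨m₂, n₂⟩ := q
  -- polar form of the angular factor
  have hpolar : ∀ (m : ℤ) (r θ : ℝ), 0 < r →
      (if 0 ≤ m then (Complex.polarCoord.symm (r, θ)) ^ m.natAbs
        else (starRingEnd ℂ (Complex.polarCoord.symm (r, θ))) ^ m.natAbs)
      = (r : ℂ) ^ m.natAbs * Complex.exp (m * θ * Complex.I) := by
    intro m r θ hr
    have hz : Complex.polarCoord.symm (r, θ) = (r : ℂ) * Complex.exp (θ * Complex.I) := by
      rw [Complex.polarCoord_symm_apply, Complex.exp_mul_I]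
      push_cast
      ring
    by_cases h0 : 0 ≤ m
    · have hnm : ((m.natAbs : ℕ) : ℂ) = (m : ℂ) := by
        have h' : ((m.natAbs : ℕ) : ℤ) = m := Int.natAbs_of_nonneg h0
        calc ((m.natAbs : ℕ) : ℂ) = (((m.natAbs : ℤ)) : ℂ) := (Int.cast_natCast m.natAbs).symm
          _ = (m : ℂ) := by rw [h']
      rw [if_pos h0, hz, mul_pow, ← Complex.exp_nat_mul,
        show ((m.natAbs : ℕ) : ℂ) * (θ * Complex.I) = (m : ℂ) * θ * Complex.I by
          rw [hnm]; ring]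
    · have hnm : ((m.natAbs : ℕ) : ℂ) = -(m : ℂ) := by
        have h' : ((m.natAbs : ℕ) : ℤ) = -m := Int.ofNat_natAbs_of_nonpos (le_of_not_ge h0)
        calc ((m.natAbs : ℕ) : ℂ) = (((m.natAbs : ℤ)) : ℂ) := (Int.cast_natCast m.natAbs).symm
          _ = -(m : ℂ) := by rw [h']; push_cast; ring
      have hconj : starRingEnd ℂ ((r : ℂ) * Complex.exp (θ * Complex.I))
          = (r : ℂ) * Complex.exp (-(θ * Complex.I)) := by
        rw [map_mul, Complex.conj_ofReal, ← Complex.exp_conj]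
        congr 1
        simp [Complex.conj_I]
      rw [if_neg h0, hz, hconj, mul_pow, ← Complex.exp_nat_mul,
        show ((m.natAbs : ℕ) : ℂ) * -(θ * Complex.I) = (m : ℂ) * θ * Complex.I by
          rw [hnm]; ring]
  have hconjexp : ∀ (m : ℤ) (θ : ℝ), starRingEnd ℂ (Complex.exp (m * θ * Complex.I))
      = Complex.exp (-((m : ℂ) * θ * Complex.I)) := by
    intro m θ
    rw [← Complex.exp_conj]
    congr 1
    simp [Complex.conj_I]
  set k₁ := m₁.natAbs with hk₁
  set k₂ := m₂.natAbs with hk₂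
  set c₁ : ℝ := Real.sqrt (1 + k₁ + 2 * n₁) with hc₁
  set c₂ : ℝ := Real.sqrt (1 + k₂ + 2 * n₂) with hc₂
  set G : ℝ → ℂ := fun r => (Set.Ioo (0:ℝ) 1).indicator
      (fun r => ((c₁ * c₂ * P n₁ k₁ (2*r^2-1) * P n₂ k₂ (2*r^2-1) * r^(k₁+k₂+1) : ℝ) : ℂ)) r
    with hG
  set E : ℝ → ℂ := fun θ => Complex.exp (((m₂ - m₁ : ℤ) : ℂ) * θ * Complex.I) with hE
  rw [← integral_indicator measurableSet_ball, ← Complex.integral_comp_polarCoord_symm]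
  have hcongr : Set.EqOn
      (fun rθ : ℝ × ℝ => rθ.1 • (Metric.ball (0:ℂ) 1).indicator
        (fun z => (starRingEnd ℂ) (ζ (m₁, n₁) z) * ζ (m₂, n₂) z) (Complex.polarCoord.symm rθ))
      (fun rθ : ℝ × ℝ => G rθ.1 * E rθ.2) polarCoord.target := by
    rintro ⟨r, θ⟩ hrθ
    rw [polarCoord_target] at hrθ
    obtain ⟨hr, hθ⟩ := hrθ
    simp only [Set.mem_Ioi] at hr
    have habs : ‖Complex.polarCoord.symm (r, θ)‖ = r := by
      rw [Complex.norm_polarCoord_symm, abs_of_pos hr]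
    by_cases hr1 : r < 1
    · have hmem : Complex.polarCoord.symm (r, θ) ∈ Metric.ball (0:ℂ) 1 := by
        rw [Metric.mem_ball, dist_zero_right, habs]
        exact hr1
      simp only [Set.indicator_of_mem hmem]
      rw [hζ, hζ, habs, hpolar m₁ r θ hr, hpolar m₂ r θ hr]
      simp only [map_mul, Complex.conj_ofReal, map_pow, hconjexp]
      rw [hG]
      simp only [Set.indicator_of_mem (Set.mem_Ioo.mpr ⟨hr, hr1⟩)]
      simp only [hE]
      rw [Complex.real_smul]
      have hexp : Complex.exp (-((m₁ : ℂ) * θ * Complex.I)) * Complex.exp ((m₂ : ℂ) * θ * Complex.I)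
          = Complex.exp (((m₂ - m₁ : ℤ) : ℂ) * θ * Complex.I) := by
        rw [← Complex.exp_add]
        congr 1
        push_cast
        ring
      rw [← hexp]
      push_cast
      ring
    · have hmem : Complex.polarCoord.symm (r, θ) ∉ Metric.ball (0:ℂ) 1 := by
        rw [Metric.mem_ball, dist_zero_right, habs]
        exact not_lt.mpr (not_lt.mp hr1)
      simp only [Set.indicator_of_notMem hmem, smul_zero, hG,
        Set.indicator_of_notMem (fun h : r ∈ Set.Ioo (0:ℝ) 1 => hr1 h.2), zero_mul]
  rw [setIntegral_congr_fun polarCoord.open_target.measurableSet hcongr]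
  rw [polarCoord_target, Measure.volume_eq_prod, setIntegral_prod_mul]
  by_cases hm : m₁ = m₂
  · subst hm
    -- angular integral is 2π
    have hEval : (∫ θ in Set.Ioo (-Real.pi) Real.pi, E θ) = ((2 * Real.pi : ℝ) : ℂ) := by
      have : ∀ θ : ℝ, E θ = 1 := by
        intro θ
        rw [hE]
        simp
      simp only [this]
      rw [setIntegral_const]
      rw [measureReal_def, Real.volume_Ioo, ENNReal.toReal_ofReal (by linarith [Real.pi_pos] : (0:ℝ) ≤ Real.pi - -Real.pi)]
      rw [Complex.real_smul]
      push_cast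
      ring
    -- radial integral
    have hk : k₂ = k₁ := rfl
    have hGval : (∫ r in Set.Ioi (0:ℝ), G r)
        = (((if n₁ = n₂ then (1/2 : ℝ) else 0) : ℝ) : ℂ) := by
      rw [hG, setIntegral_indicator measurableSet_Ioo,
        Set.inter_eq_self_of_subset_right Set.Ioo_subset_Ioi_self,
        ← integral_Ioc_eq_integral_Ioo, ← intervalIntegral.integral_of_le zero_le_one]
      rw [intervalIntegral.integral_ofReal]
      norm_cast
      -- now a real computation
      obtain ⟨p₁, hp₁deg, hp₁⟩ := hPpoly n₁ k₁
      obtain ⟨p₂, hp₂deg, hp₂⟩ := hPpoly n₂ k₁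
      set f : ℝ → ℝ := fun u => (p₁.eval u * p₂.eval u * (1+u)^k₁) * (c₁*c₂*((2:ℝ)^k₁*4)⁻¹)
        with hf
      have hfc : Continuous f := by
        apply Continuous.mul _ continuous_const
        exact (p₁.continuous.mul p₂.continuous).mul ((continuous_const.add continuous_id).pow _)
      have hderiv : ∀ x ∈ Set.uIcc (0:ℝ) 1, HasDerivAt (fun r : ℝ => 2*r^2-1) (4*x) x := by
        intro x _
        have h := ((hasDerivAt_pow 2 x).const_mul (2:ℝ)).sub_const 1
        refine h.congr_deriv ?_
        norm_num
        ring
      have hgc : ContinuousOn (fun x : ℝ => 4*x) (Set.uIcc (0:ℝ) 1) := by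
        exact (continuous_const.mul continuous_id).continuousOn
      have hsub := intervalIntegral.integral_comp_smul_deriv hderiv hgc hfc
      have hid : ∀ r : ℝ, c₁ * c₂ * P n₁ k₁ (2*r^2-1) * P n₂ k₁ (2*r^2-1) * r^(k₁+k₂+1)
          = (4*r) • (f ∘ (fun r : ℝ => 2*r^2-1)) r := by
        intro r
        simp only [Function.comp, hf, smul_eq_mul, ← hp₁, ← hp₂, ← hk]
        rw [show (1 + (2*r^2-1)) = 2*r^2 by ring, mul_pow]
        have h2k : ((2:ℝ)^k₁) ≠ 0 := by positivity
        field_simp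
        ring
      rw [intervalIntegral.integral_congr (fun r _ => hid r), hsub]
      norm_num
      have hend : ∫ u in (-1:ℝ)..1, f u
          = (∫ u in (-1:ℝ)..1, P n₁ k₁ u * P n₂ k₁ u * (1+u)^k₁) * (c₁*c₂*((2:ℝ)^k₁*4)⁻¹) := by
        rw [← intervalIntegral.integral_mul_const]
        apply intervalIntegral.integral_congr
        intro u _
        simp [hf, hp₁, hp₂]
      rw [hend, hPorth]
      by_cases hn : n₁ = n₂
      · subst hn
        rw [if_pos rfl, if_pos rfl]
        have hcc : c₁ * c₂ = 1 + (k₁:ℝ) + 2*n₁ := by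
          rw [hc₁, hc₂, hk]
          exact Real.mul_self_sqrt (by positivity)
        rw [hcc]
        have hden : (1 + (k₁:ℝ) + 2*n₁) ≠ 0 := by positivity
        have h2k : ((2:ℝ)^k₁) ≠ 0 := by positivity
        field_simp
        ring
      · rw [if_neg hn, if_neg hn, zero_mul]
    rw [hGval, hEval]
    by_cases hn : n₁ = n₂
    · subst hn
      rw [if_pos rfl, if_pos rfl]
      have : (Real.pi : ℂ) ≠ 0 := Complex.ofReal_ne_zero.mpr Real.pi_ne_zero
      field_simp
      push_cast
      ring
    · rw [if_neg hn, if_neg (by simp [hn])]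
      simp
  · -- angular integral vanishes
    have hd : ((m₂ - m₁ : ℤ) : ℂ) * Complex.I ≠ 0 := by
      apply mul_ne_zero _ Complex.I_ne_zero
      exact_mod_cast sub_ne_zero.2 (Ne.symm hm)
    have hEval : (∫ θ in Set.Ioo (-Real.pi) Real.pi, E θ) = 0 := by
      rw [← integral_Ioc_eq_integral_Ioo,
        ← intervalIntegral.integral_of_le (by linarith [Real.pi_pos] : -Real.pi ≤ Real.pi)]
      have : ∀ θ : ℝ, E θ = Complex.exp ((((m₂ - m₁ : ℤ) : ℂ) * Complex.I) * θ) := by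
        intro θ
        rw [hE]
        ring_nf
      rw [intervalIntegral.integral_congr (fun θ _ => this θ), integral_exp_mul_complex hd]
      have h1 : (((m₂ - m₁ : ℤ) : ℂ) * Complex.I) * (Real.pi : ℂ)
          = ((m₂ - m₁ : ℤ) : ℂ) * ((Real.pi : ℂ) * Complex.I) := by ring
      have h2 : (((m₂ - m₁ : ℤ) : ℂ) * Complex.I) * ((-Real.pi : ℝ) : ℂ)
          = ((m₂ - m₁ : ℤ) : ℂ) * (-((Real.pi : ℂ) * Complex.I)) := by push_cast; ring
      rw [h1, h2, Complex.exp_int_mul, Complex.exp_int_mul, Complex.exp_pi_mul_I]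
      rw [Complex.exp_neg, Complex.exp_pi_mul_I]
      norm_num
    rw [hEval, mul_zero, mul_zero, if_neg (by simp [hm])]

/-- The Zernike polynomials form an orthonormal family whose span is
dense in L²(D), D the open unit disc; i.e. they form an orthonormal Hilbert basis
of L²(D). The Zernike polynomial ζ_{mn}(z) = μ_{mn} P_n^{(0,|m|)}(2|z|²−1) ρ^{|m|} e^{imθ}
is expressed on D ⊂ ℂ using ρ^{|m|} e^{imθ} = z^m (m ≥ 0) or conj(z)^{|m|} (m < 0). -/
theorem zernike_dense_in_L2
    (P : ℕ → ℕ → ℝ → ℝ)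
    (hPpoly : ∀ (n k : ℕ), ∃ p : Polynomial ℝ, p.degree = n ∧ ∀ x, P n k x = p.eval x)
    (hPorth : ∀ (k n₁ n₂ : ℕ),
      (∫ ξ in (-1:ℝ)..1, P n₁ k ξ * P n₂ k ξ * (1 + ξ) ^ k)
        = if n₁ = n₂ then 2 ^ (k+1) / (1 + (k:ℝ) + 2 * n₁) else 0)
    (ζ : ℤ × ℕ → ℂ → ℂ)
    (hζ : ∀ (m : ℤ) (n : ℕ) (z : ℂ), ζ (m, n) z =
      (Real.sqrt (1 + m.natAbs + 2 * n) : ℂ) * (P n m.natAbs (2 * ‖z‖ ^ 2 - 1) : ℂ)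
        * (if 0 ≤ m then z ^ m.natAbs else (starRingEnd ℂ z) ^ m.natAbs)) :
    -- orthonormality with respect to ⟨v,w⟩ = (1/π) ∫_D conj v · w dA
    (∀ p q : ℤ × ℕ,
      (1 / (Real.pi : ℂ)) * ∫ z in Metric.ball (0:ℂ) 1, (starRingEnd ℂ) (ζ p z) * ζ q z
        = if p = q then 1 else 0) ∧
    -- density of the span in L²(D)
    (∀ f : Lp ℂ 2 (volume.restrict (Metric.ball (0:ℂ) 1)), ∀ ε : ℝ, 0 < ε →
      ∃ c : (ℤ × ℕ) →₀ ℂ,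
        eLpNorm ((f : ℂ → ℂ) - fun z => ∑ p ∈ c.support, c p • ζ p z) 2
            (volume.restrict (Metric.ball (0:ℂ) 1)) < ENNReal.ofReal ε) := by
  constructor
  · exact zernike_orthonormal P hPpoly hPorth ζ hζ
  · intro f ε hε
    haveI : IsFiniteMeasure (volume.restrict (Metric.ball (0:ℂ) 1)) := ⟨by
      rw [Measure.restrict_apply_univ]; exact measure_ball_lt_top⟩
    have hf : MemLp (f : ℂ → ℂ) 2 (volume.restrict (Metric.ball (0:ℂ) 1)) := Lp.memLp f
    have hq : ENNReal.ofReal (ε/4) ≠ 0 := (ENNReal.ofReal_pos.mpr (by linarith)).ne'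
    obtain ⟨g, hg, -⟩ := hf.exists_boundedContinuous_eLpNorm_sub_le
      (by simp : (2:ℝ≥0∞) ≠ ⊤) hq
    have hmono : ∀ a b : ℕ,
        (fun z : ℂ => z ^ a * (starRingEnd ℂ z) ^ b) ∈ Submodule.span ℂ (Set.range ζ) :=
      fun a b => mono_mem_span_zeta P hPpoly ζ hζ span_top_of_degree_eq a b
    haveI : CompactSpace (Metric.closedBall (0:ℂ) 1 : Set ℂ) :=
      isCompact_iff_compactSpace.mp (isCompact_closedBall _ _)
    obtain ⟨H, hHspan, hHapprox⟩ := approx_on_closedBall ζ hmono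
      ⟨fun z => g (z : ℂ), g.continuous.comp continuous_subtype_val⟩ (ε/8) (by linarith)
    obtain ⟨c, hc⟩ := Finsupp.mem_span_range_iff_exists_finsupp.mp hHspan
    have hHfun : (fun z => ∑ p ∈ c.support, c p • ζ p z) = H := by
      funext z
      rw [← hc]
      simp [Finsupp.sum, Finset.sum_apply, Pi.smul_apply]
    refine ⟨c, ?_⟩
    rw [hHfun]
    have hHcont : Continuous H := by
      rw [← hHfun]
      exact continuous_finset_sum _
        (fun p _ => by exact (zeta_continuous P hPpoly ζ hζ p).const_smul (c p))
    have hsplit : (f : ℂ → ℂ) - H = (((f : ℂ → ℂ) - (g : ℂ → ℂ)) + ((g : ℂ → ℂ) - H)) := by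
      funext z
      simp only [Pi.sub_apply, Pi.add_apply]
      ring
    have h1 : AEStronglyMeasurable ((f : ℂ → ℂ) - (g : ℂ → ℂ))
        (volume.restrict (Metric.ball (0:ℂ) 1)) :=
      hf.aestronglyMeasurable.sub g.continuous.aestronglyMeasurable
    have h2 : AEStronglyMeasurable (((g : ℂ → ℂ)) - H)
        (volume.restrict (Metric.ball (0:ℂ) 1)) :=
      (g.continuous.sub hHcont).aestronglyMeasurable
    have hae : ∀ᵐ z ∂(volume.restrict (Metric.ball (0:ℂ) 1)),
        ‖((g : ℂ → ℂ) - H) z‖ ≤ ε/8 := by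
      apply ae_restrict_of_forall_mem measurableSet_ball
      intro z hz
      have hzK : z ∈ Metric.closedBall (0:ℂ) 1 := Metric.ball_subset_closedBall hz
      simpa using hHapprox ⟨z, hzK⟩
    have hvol : (volume.restrict (Metric.ball (0:ℂ) 1)) Set.univ ≤ 4 := by
      rw [Measure.restrict_apply_univ, Complex.volume_ball]
      simp only [ENNReal.ofReal_one, one_pow, one_mul]
      calc (NNReal.pi : ℝ≥0∞) ≤ ((4:ℝ≥0) : ℝ≥0∞) := by
            apply ENNReal.coe_le_coe.mpr
            rw [← NNReal.coe_le_coe]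
            push_cast
            exact Real.pi_le_four
        _ = 4 := by norm_num
    have hrpow : ((volume.restrict (Metric.ball (0:ℂ) 1)) Set.univ) ^ ((2:ℝ≥0∞).toReal⁻¹)
        ≤ 2 := by
      have h4 : ((4:ℝ≥0∞)) ^ ((2:ℝ≥0∞).toReal⁻¹) = 2 := by
        rw [show ((2:ℝ≥0∞).toReal⁻¹) = (2⁻¹ : ℝ) by simp]
        rw [show (4:ℝ≥0∞) = (2:ℝ≥0∞) ^ ((2:ℕ):ℝ) by rw [ENNReal.rpow_natCast]; norm_num]
        rw [← ENNReal.rpow_mul]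
        norm_num
      calc ((volume.restrict (Metric.ball (0:ℂ) 1)) Set.univ) ^ ((2:ℝ≥0∞).toReal⁻¹)
          ≤ ((4:ℝ≥0∞)) ^ ((2:ℝ≥0∞).toReal⁻¹) :=
            ENNReal.rpow_le_rpow hvol (by norm_num)
        _ = 2 := h4
    have hbound : eLpNorm ((g : ℂ → ℂ) - H) 2 (volume.restrict (Metric.ball (0:ℂ) 1))
        ≤ 2 * ENNReal.ofReal (ε/8) := by
      calc eLpNorm ((g : ℂ → ℂ) - H) 2 (volume.restrict (Metric.ball (0:ℂ) 1))
          ≤ ((volume.restrict (Metric.ball (0:ℂ) 1)) Set.univ) ^ ((2:ℝ≥0∞).toReal⁻¹)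
              * ENNReal.ofReal (ε/8) := eLpNorm_le_of_ae_bound hae
        _ ≤ 2 * ENNReal.ofReal (ε/8) := mul_le_mul_left hrpow _
    have h28 : (2:ℝ≥0∞) * ENNReal.ofReal (ε/8) = ENNReal.ofReal (ε/4) := by
      rw [show (2:ℝ≥0∞) = ENNReal.ofReal (2:ℝ) by norm_num,
        ← ENNReal.ofReal_mul (by norm_num : (0:ℝ) ≤ 2)]
      congr 1
      ring
    calc eLpNorm ((f : ℂ → ℂ) - H) 2 (volume.restrict (Metric.ball (0:ℂ) 1))
        = eLpNorm (((f : ℂ → ℂ) - (g : ℂ → ℂ)) + ((g : ℂ → ℂ) - H)) 2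
            (volume.restrict (Metric.ball (0:ℂ) 1)) := by rw [← hsplit]
      _ ≤ eLpNorm ((f : ℂ → ℂ) - (g : ℂ → ℂ)) 2 (volume.restrict (Metric.ball (0:ℂ) 1))
            + eLpNorm ((g : ℂ → ℂ) - H) 2 (volume.restrict (Metric.ball (0:ℂ) 1)) :=
          eLpNorm_add_le h1 h2 one_le_two
      _ ≤ ENNReal.ofReal (ε/4) + 2 * ENNReal.ofReal (ε/8) := add_le_add hg hbound
      _ = ENNReal.ofReal (ε/4) + ENNReal.ofReal (ε/4) := by rw [h28]
      _ = ENNReal.ofReal (ε/2) := by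
          rw [← ENNReal.ofReal_add (by linarith) (by linarith)]
          congr 1
          ring
      _ < ENNReal.ofReal ε := (ENNReal.ofReal_lt_ofReal_iff hε).mpr (by linarith)
end

section
/- For m ∈ ℤ fixed, the stiffness matrix entries A(m)_{n'n} = (1/π)∫₀^{2π}∫₀¹ conj(∇_H ζ_{mn'}) · ∇_H ζ_{mn} ρ dρ dθ are given by A(m)_{n'n} = 2 μ_{mn'} μ_{mn} [2γ(γ + |m| + 1) + |m|], where γ = min(n', n). -/
open Complex

/-- The Jacobi polynomial P_n^{(0,k)} given by its standard explicit formula. -/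
noncomputable def jacobiP (n k : ℕ) (x : ℝ) : ℝ :=
  ∑ s ∈ Finset.range (n + 1),
    (n.choose (n - s) : ℝ) * ((n + k).choose s : ℝ)
      * ((x - 1) / 2) ^ s * ((x + 1) / 2) ^ (n - s)

/-- The Zernike polynomial ζ_{mn}(ρ,θ) = μ_{mn} P_n^{(0,|m|)}(2ρ²−1) ρ^{|m|} e^{imθ}. -/
noncomputable def zernike (m : ℤ) (n : ℕ) (ρ θ : ℝ) : ℂ :=
  (Real.sqrt (1 + m.natAbs + 2 * n) : ℂ) * (jacobiP n m.natAbs (2 * ρ ^ 2 - 1) : ℂ)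
    * (ρ : ℂ) ^ m.natAbs * Complex.exp (Complex.I * m * θ)

open Finset Polynomial

/-- monomial coefficients of the Jacobi polynomial P_n^{(0,k)}(2x-1) -/
noncomputable def Zc (k n s : ℕ) : ℝ :=
  (-1 : ℝ) ^ (n - s) * (n.choose s) * ((k + n + s).choose n)

lemma vand (n k d : ℕ) (hd : d ≤ n) :
    ∑ s ∈ Finset.range (n+1), n.choose s * ((n+k).choose s * s.choose d)
      = n.choose d * ((n + k) + (n - d)).choose n := by
  have hsub : Finset.Ico d (n+1) ⊆ Finset.range (n+1) := by
    intro x hx; simp only [Finset.mem_Ico, Finset.mem_range] at *; omega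
  have h1 : ∑ s ∈ Finset.range (n+1), n.choose s * ((n+k).choose s * s.choose d)
      = ∑ s ∈ Finset.Ico d (n+1), n.choose s * ((n+k).choose s * s.choose d) := by
    rw [← Finset.sum_subset hsub]
    intro x hx hnx
    simp only [Finset.mem_Ico, Finset.mem_range] at hx hnx
    rw [Nat.choose_eq_zero_of_lt (by omega : x < d)]
    ring
  have h2 : ∑ s ∈ Finset.Ico d (n+1), n.choose s * ((n+k).choose s * s.choose d)
      = ∑ u ∈ Finset.range (n + 1 - d),
          n.choose d * ((n-d).choose u * (n+k).choose (d+u)) := by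
    rw [Finset.sum_Ico_eq_sum_range]
    apply Finset.sum_congr rfl
    intro u hu
    simp only [Finset.mem_range] at hu
    calc n.choose (d+u) * ((n+k).choose (d+u) * (d+u).choose d)
        = (n.choose (d+u) * (d+u).choose d) * (n+k).choose (d+u) := by ring
      _ = (n.choose d * (n-d).choose ((d+u)-d)) * (n+k).choose (d+u) := by
            rw [Nat.choose_mul (by omega : d ≤ d + u)]
      _ = n.choose d * ((n-d).choose u * (n+k).choose (d+u)) := by
            rw [show (d+u) - d = u by omega]; ring
  have h3 : ((n + k) + (n - d)).choose n
      = ∑ u ∈ Finset.range (n + 1 - d), (n-d).choose u * (n+k).choose (d+u) := by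
    rw [Nat.add_choose_eq, Finset.Nat.sum_antidiagonal_eq_sum_range_succ
      (fun i j => (n+k).choose i * (n-d).choose j) n]
    have h4 : ∑ i ∈ Finset.range (n+1), (n+k).choose i * (n-d).choose (n - i)
        = ∑ i ∈ Finset.Ico d (n+1), (n+k).choose i * (n-d).choose (n - i) := by
      rw [← Finset.sum_subset hsub]
      intro x hx hnx
      simp only [Finset.mem_Ico, Finset.mem_range] at hx hnx
      rw [Nat.choose_eq_zero_of_lt (by omega : n - d < n - x)]
      ring
    rw [h4, Finset.sum_Ico_eq_sum_range]
    apply Finset.sum_congr rfl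
    intro u hu
    simp only [Finset.mem_range] at hu
    rw [show n - (d + u) = (n-d) - u by omega, Nat.choose_symm (by omega : u ≤ n - d)]
    ring
  rw [h1, h2, h3, Finset.mul_sum]

lemma jacobi_monomial (n k : ℕ) (x : ℝ) :
    jacobiP n k (2*x - 1) = ∑ r ∈ Finset.range (n+1), Zc k n r * x^r := by
  have step1 : jacobiP n k (2*x-1)
      = ∑ s ∈ Finset.range (n+1),
          (n.choose s : ℝ) * ((n+k).choose s) * ((x-1)^s * x^(n-s)) := by
    unfold jacobiP
    apply Finset.sum_congr rfl
    intro s hs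
    simp only [Finset.mem_range] at hs
    rw [Nat.choose_symm (by omega : s ≤ n)]
    have e1 : (2*x - 1 - 1)/2 = x - 1 := by ring
    have e2 : (2*x - 1 + 1)/2 = x := by ring
    rw [e1, e2]; ring
  -- per-s expansion into the r-indexed sum
  have step2 : ∀ s ∈ Finset.range (n+1),
      (n.choose s : ℝ) * ((n+k).choose s) * ((x-1)^s * x^(n-s))
      = ∑ r ∈ Finset.range (n+1),
          (-1:ℝ)^(n-r) * ((n.choose s : ℝ) * ((n+k).choose s) * (s.choose (n-r))) * x^r := by
    intro s hs
    simp only [Finset.mem_range] at hs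
    have hsn : s ≤ n := by omega
    have hsub : Finset.Ico (n-s) (n+1) ⊆ Finset.range (n+1) := by
      intro y hy; simp only [Finset.mem_Ico, Finset.mem_range] at *; omega
    have h4 : ∑ r ∈ Finset.range (n+1),
        (-1:ℝ)^(n-r) * ((n.choose s : ℝ) * ((n+k).choose s) * (s.choose (n-r))) * x^r
        = ∑ r ∈ Finset.Ico (n-s) (n+1),
            (-1:ℝ)^(n-r) * ((n.choose s : ℝ) * ((n+k).choose s) * (s.choose (n-r))) * x^r := by
      rw [← Finset.sum_subset hsub]
      intro y hy hny
      simp only [Finset.mem_Ico, Finset.mem_range] at hy hny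
      rw [Nat.choose_eq_zero_of_lt (by omega : s < n - y)]
      push_cast; ring
    rw [h4, Finset.sum_Ico_eq_sum_range, show n + 1 - (n-s) = s + 1 by omega]
    rw [sub_pow x 1 s]
    rw [Finset.sum_mul, Finset.mul_sum]
    apply Finset.sum_congr rfl
    intro j hj
    simp only [Finset.mem_range] at hj
    have hjs : j ≤ s := by omega
    rw [show n - (n - s + j) = s - j by omega]
    rw [Nat.choose_symm hjs]
    have hsign : (-1:ℝ)^(s-j) = (-1:ℝ)^(j+s) := by
      rw [show j + s = (s-j) + 2*j by omega, pow_add, pow_mul]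
      norm_num
    rw [hsign]
    rw [pow_add x (n-s) j]
    push_cast
    ring
  rw [step1, Finset.sum_congr rfl step2, Finset.sum_comm]
  apply Finset.sum_congr rfl
  intro r hr
  simp only [Finset.mem_range] at hr
  have hd : n - r ≤ n := by omega
  have hv := vand n k (n - r) hd
  have hcast : (∑ s ∈ Finset.range (n+1),
      (-1:ℝ)^(n-r) * ((n.choose s : ℝ) * ((n+k).choose s) * (s.choose (n-r))) * x^r)
      = (-1:ℝ)^(n-r) * ((∑ s ∈ Finset.range (n+1),
          n.choose s * ((n+k).choose s * s.choose (n-r)) : ℕ) : ℝ) * x^r := by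
    push_cast
    rw [Finset.mul_sum, Finset.sum_mul]
    apply Finset.sum_congr rfl
    intro s _
    ring
  rw [hcast, hv]
  unfold Zc
  rw [show n - (n - r) = r by omega, Nat.choose_symm (by omega : r ≤ n)]
  rw [show (n + k) + r = k + n + r by omega]
  push_cast
  ring

lemma fd_poly : ∀ (q : ℕ) (P : ℝ[X]), P.natDegree ≤ q →
    (fwdDiff (1:ℕ))^[q] (fun t : ℕ => P.eval (t : ℝ)) 0 = q.factorial * P.coeff q := by
  intro q
  induction q with
  | zero =>
    intro P hP
    simp only [Function.iterate_zero, id_eq, Nat.cast_zero, Nat.factorial_zero, Nat.cast_one,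
      one_mul]
    rw [Polynomial.coeff_zero_eq_eval_zero]
  | succ q ih =>
    intro P hP
    have htay : ∀ j, q ≤ j → (taylor (1:ℝ) P).coeff j
        = P.coeff j + ((j+1 : ℕ) : ℝ) * P.coeff (j+1) := by
      intro j hj
      rw [Polynomial.taylor_coeff]
      have hdeg : (Polynomial.hasseDeriv j P).natDegree < 2 := by
        have h1 := Polynomial.natDegree_hasseDeriv_le P j
        omega
      rw [Polynomial.eval_eq_sum_range' hdeg]
      rw [Finset.sum_range_succ, Finset.sum_range_one]
      simp only [Polynomial.hasseDeriv_coeff, one_pow, mul_one, pow_zero]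
      rw [show 1 + j = j + 1 by omega, Nat.choose_succ_self_right, Nat.zero_add, Nat.choose_self]
      push_cast; ring
    set Q : ℝ[X] := taylor 1 P - P with hQdef
    have hQc : ∀ j, q ≤ j → Q.coeff j = ((j+1:ℕ):ℝ) * P.coeff (j+1) := by
      intro j hj
      rw [hQdef, Polynomial.coeff_sub, htay j hj]; ring
    have hQdeg : Q.natDegree ≤ q := by
      rw [Polynomial.natDegree_le_iff_coeff_eq_zero]
      intro N hN
      rw [hQc N (by omega)]
      rw [Polynomial.coeff_eq_zero_of_natDegree_lt (by omega : P.natDegree < N + 1)]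
      ring
    have h1 : fwdDiff (1:ℕ) (fun t : ℕ => P.eval (t:ℝ)) = fun t : ℕ => Q.eval (t:ℝ) := by
      funext t
      simp only [fwdDiff, hQdef, Polynomial.eval_sub, Polynomial.taylor_eval]
      push_cast; ring_nf
    rw [Function.iterate_succ_apply, h1, ih Q hQdeg, hQc q le_rfl]
    rw [Nat.factorial_succ]
    push_cast; ring

lemma prod_Icc_asc (a q : ℕ) : ∏ i ∈ Finset.Icc 1 q, (a + i) = (a+1).ascFactorial q := by
  induction q with
  | zero => simp
  | succ q ih =>
    rw [Finset.prod_Icc_succ_top (by omega : 1 ≤ q + 1), ih, Nat.ascFactorial_succ]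
    ring

lemma key_inner (k q s : ℕ) (hs1 : 1 ≤ s) (hsq : s ≤ q) :
    ∑ t ∈ Finset.range (q+1), Zc k q t * ((t:ℝ) / ((k:ℝ)+s+t)) = 1 := by
  set P : Polynomial ℝ :=
    Polynomial.X * ∏ i ∈ (Finset.Icc 1 q).erase s, (Polynomial.X + Polynomial.C ((k+i : ℕ):ℝ))
    with hP
  have hprodmonic : Polynomial.Monic (∏ i ∈ (Finset.Icc 1 q).erase s,
      (Polynomial.X + Polynomial.C ((k+i : ℕ):ℝ))) :=
    Polynomial.monic_prod_of_monic _ _ (fun i _ => Polynomial.monic_X_add_C _)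
  have hmonic : P.Monic := Polynomial.monic_X.mul hprodmonic
  have hcard : ((Finset.Icc 1 q).erase s).card = q - 1 := by
    rw [Finset.card_erase_of_mem (Finset.mem_Icc.mpr ⟨hs1, hsq⟩), Nat.card_Icc]
    omega
  have hdeg : P.natDegree = q := by
    rw [hP, Polynomial.monic_X.natDegree_mul hprodmonic, Polynomial.natDegree_X,
      Polynomial.natDegree_prod_of_monic _ _ (fun i _ => Polynomial.monic_X_add_C _)]
    simp only [Polynomial.natDegree_X_add_C]
    rw [Finset.sum_const, hcard, smul_eq_mul, mul_one]
    omega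
  have hprod : ∀ t : ℕ, ((k+s+t : ℕ):ℝ) * P.eval (t:ℝ)
      = (t:ℝ) * ((q.factorial * ((k+q+t).choose q) : ℕ) : ℝ) := by
    intro t
    rw [hP, Polynomial.eval_mul, Polynomial.eval_X, Polynomial.eval_prod]
    simp only [Polynomial.eval_add, Polynomial.eval_X, Polynomial.eval_C]
    have h2 : (((t:ℝ)) + ((k+s:ℕ):ℝ)) * ∏ i ∈ (Finset.Icc 1 q).erase s, ((t:ℝ) + ((k+i:ℕ):ℝ))
        = ∏ i ∈ Finset.Icc 1 q, ((t:ℝ) + ((k+i:ℕ):ℝ)) := by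
      simpa using Finset.mul_prod_erase (Finset.Icc 1 q) (fun i => (t:ℝ) + ((k+i:ℕ):ℝ))
        (Finset.mem_Icc.mpr ⟨hs1, hsq⟩)
    have h3 : ∏ i ∈ Finset.Icc 1 q, ((t:ℝ) + ((k+i:ℕ):ℝ))
        = ((∏ i ∈ Finset.Icc 1 q, (t + (k+i)) : ℕ) : ℝ) := by
      push_cast
      exact Finset.prod_congr rfl (fun i _ => by ring)
    have h4 : (∏ i ∈ Finset.Icc 1 q, (t + (k+i)) : ℕ) = q.factorial * ((k+q+t).choose q) := by
      have := prod_Icc_asc (t+k) q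
      rw [Finset.prod_congr rfl (fun i _ => by omega : ∀ i ∈ Finset.Icc 1 q, t+(k+i) = (t+k)+i),
        this, Nat.ascFactorial_eq_factorial_mul_choose]
      rw [show t+k+q = k+q+t by omega]
    calc ((k+s+t : ℕ):ℝ) * ((t:ℝ) * ∏ i ∈ (Finset.Icc 1 q).erase s, ((t:ℝ) + ((k+i:ℕ):ℝ)))
        = (t:ℝ) * ((((t:ℝ)) + ((k+s:ℕ):ℝ)) *
            ∏ i ∈ (Finset.Icc 1 q).erase s, ((t:ℝ) + ((k+i:ℕ):ℝ))) := by push_cast; ring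
      _ = (t:ℝ) * ((∏ i ∈ Finset.Icc 1 q, (t + (k+i)) : ℕ) : ℝ) := by rw [h2, h3]
      _ = (t:ℝ) * ((q.factorial * ((k+q+t).choose q) : ℕ) : ℝ) := by rw [h4]
  have hfd := fwdDiff_iter_eq_sum_shift (1:ℕ) (fun t : ℕ => P.eval (t:ℝ)) q 0
  rw [fd_poly q P (le_of_eq hdeg)] at hfd
  have hcoeff : P.coeff q = 1 := by
    have := hmonic.coeff_natDegree
    rwa [hdeg] at this
  rw [hcoeff] at hfd
  have hsum : ∑ t ∈ Finset.range (q+1), ((-1:ℝ)^(q-t) * (q.choose t)) * P.eval (t:ℝ)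
      = (q.factorial : ℝ) := by
    rw [← mul_one (q.factorial : ℝ)]
    rw [hfd]
    apply Finset.sum_congr rfl
    intro t _
    simp only [zero_add, smul_eq_mul, mul_one, zsmul_eq_mul]
    push_cast
    ring
  have hterm : ∀ t ∈ Finset.range (q+1), Zc k q t * ((t:ℝ)/((k:ℝ)+s+t))
      = ((-1:ℝ)^(q-t) * (q.choose t)) * P.eval (t:ℝ) / (q.factorial : ℝ) := by
    intro t _
    have hne : ((k+s+t : ℕ):ℝ) ≠ 0 := Nat.cast_ne_zero.mpr (by omega)
    have hqf : ((q.factorial : ℕ):ℝ) ≠ 0 := Nat.cast_ne_zero.mpr q.factorial_ne_zero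
    have hPe : P.eval (t:ℝ)
        = (t:ℝ) * ((q.factorial * ((k+q+t).choose q) : ℕ) : ℝ) / ((k+s+t:ℕ):ℝ) := by
      rw [eq_div_iff hne]
      rw [mul_comm (P.eval (t:ℝ)) _] at *
      linarith [hprod t]
    rw [hPe]
    unfold Zc
    push_cast
    field_simp
  rw [Finset.sum_congr rfl hterm, ← Finset.sum_div, hsum]
  field_simp

lemma sum_Zc (k n : ℕ) : ∑ s ∈ Finset.range (n+1), Zc k n s = 1 := by
  have h := jacobi_monomial n k 1
  rw [show (2*(1:ℝ) - 1) = 1 by norm_num] at h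
  simp only [one_pow, mul_one] at h
  rw [← h]
  unfold jacobiP
  rw [Finset.sum_eq_single 0]
  · norm_num
  · intro s _ hs
    rw [show ((1:ℝ)-1)/2 = 0 by norm_num, zero_pow hs]
    ring
  · intro h0; simp at h0

lemma sum_Zc_mul (k n : ℕ) : ∑ s ∈ Finset.range (n+1), Zc k n s * s = (n:ℝ) * (n + k + 1) := by
  -- via derivatives at x = 1
  have hfg : (fun x : ℝ => jacobiP n k (2*x - 1))
      = fun x : ℝ => ∑ r ∈ Finset.range (n+1), Zc k n r * x^r :=
    funext (jacobi_monomial n k)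
  have hf : HasDerivAt (fun x : ℝ => jacobiP n k (2*x - 1))
      (∑ s ∈ Finset.range (n+1), (n.choose s : ℝ) * ((n+k).choose s) *
        ((s * (0:ℝ)^(s-1)) * (1:ℝ)^(n-s) + (0:ℝ)^s * (((n-s:ℕ):ℝ) * (1:ℝ)^(n-s-1)))) 1 := by
    have hrw : (fun x : ℝ => jacobiP n k (2*x - 1))
        = fun x : ℝ => ∑ s ∈ Finset.range (n+1),
            (n.choose s : ℝ) * ((n+k).choose s) * ((x-1)^s * x^(n-s)) := by
      funext x
      unfold jacobiP
      apply Finset.sum_congr rfl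
      intro s hs
      simp only [Finset.mem_range] at hs
      rw [Nat.choose_symm (by omega : s ≤ n)]
      rw [show (2*x - 1 - 1)/2 = x - 1 by ring, show (2*x - 1 + 1)/2 = x by ring]
      ring
    rw [hrw]
    apply HasDerivAt.fun_sum
    intro s _
    have h1 : HasDerivAt (fun x : ℝ => (x-1)^s) (s * ((1:ℝ)-1)^(s-1) * 1) 1 :=
      ((hasDerivAt_id 1).sub_const 1).pow s
    have h2 : HasDerivAt (fun x : ℝ => x^(n-s)) (((n-s:ℕ):ℝ) * (1:ℝ)^(n-s-1)) 1 :=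
      hasDerivAt_pow (n-s) (1:ℝ)
    have h3 := (h1.fun_mul h2).const_mul ((n.choose s : ℝ) * ((n+k).choose s))
    convert h3 using 1
    · rfl
    norm_num
  have hg : HasDerivAt (fun x : ℝ => ∑ r ∈ Finset.range (n+1), Zc k n r * x^r)
      (∑ s ∈ Finset.range (n+1), Zc k n s * (s * (1:ℝ)^(s-1))) 1 := by
    apply HasDerivAt.fun_sum
    intro s _
    exact (hasDerivAt_pow s 1).const_mul (Zc k n s)
  rw [hfg] at hf
  have hder := hf.unique hg
  -- evaluate the explicit derivative sum
  have heval : (∑ s ∈ Finset.range (n+1), (n.choose s : ℝ) * ((n+k).choose s) *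
      ((s * (0:ℝ)^(s-1)) * (1:ℝ)^(n-s) + (0:ℝ)^s * (((n-s:ℕ):ℝ) * (1:ℝ)^(n-s-1))))
      = (n:ℝ) * (n + k + 1) := by
    have hsplit : ∀ s ∈ Finset.range (n+1), (n.choose s : ℝ) * ((n+k).choose s) *
        ((s * (0:ℝ)^(s-1)) * (1:ℝ)^(n-s) + (0:ℝ)^s * (((n-s:ℕ):ℝ) * (1:ℝ)^(n-s-1)))
        = (n.choose s : ℝ) * ((n+k).choose s) * (s * (0:ℝ)^(s-1))
          + (n.choose s : ℝ) * ((n+k).choose s) * ((0:ℝ)^s * ((n-s:ℕ):ℝ)) := by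
      intro s _
      simp only [one_pow]
      ring
    rw [Finset.sum_congr rfl hsplit, Finset.sum_add_distrib]
    have e1 : ∑ s ∈ Finset.range (n+1),
        (n.choose s : ℝ) * ((n+k).choose s) * (s * (0:ℝ)^(s-1)) = (n:ℝ) * (n+k) := by
      rcases Nat.eq_zero_or_pos n with hn | hn
      · subst hn; simp
      rw [Finset.sum_eq_single 1]
      · norm_num [Nat.choose_one_right]
      · intro s _ hs
        rcases Nat.eq_zero_or_pos s with h0 | h0
        · subst h0; simp
        · rw [zero_pow (by omega : s - 1 ≠ 0)]; ring
      · intro hmem; exfalso; apply hmem; simp; omega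
    have e2 : ∑ s ∈ Finset.range (n+1),
        (n.choose s : ℝ) * ((n+k).choose s) * ((0:ℝ)^s * ((n-s:ℕ):ℝ)) = (n:ℝ) := by
      rw [Finset.sum_eq_single 0]
      · simp
      · intro s _ hs
        rw [zero_pow hs]; ring
      · intro hmem; exfalso; apply hmem; simp
    rw [e1, e2]; ring
  rw [heval] at hder
  rw [show (∑ s ∈ Finset.range (n+1), Zc k n s * (s:ℝ))
      = ∑ s ∈ Finset.range (n+1), Zc k n s * ((s:ℝ) * (1:ℝ)^(s-1)) from
    Finset.sum_congr rfl (fun s _ => by simp)]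
  exact hder.symm

lemma Tsum_le (k p q : ℕ) (hpq : p ≤ q) :
    ∑ s ∈ Finset.range (p+1), ∑ t ∈ Finset.range (q+1),
      Zc k p s * Zc k q t * (((s:ℝ)*(t:ℝ)) / ((k:ℝ)+s+t)) = (p:ℝ) * (p + k + 1) := by
  have hinner : ∀ s ∈ Finset.range (p+1),
      ∑ t ∈ Finset.range (q+1), Zc k p s * Zc k q t * (((s:ℝ)*(t:ℝ)) / ((k:ℝ)+s+t))
      = Zc k p s * s := by
    intro s hs
    simp only [Finset.mem_range] at hs
    rcases Nat.eq_zero_or_pos s with h0 | h0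
    · subst h0; simp
    · have hk := key_inner k q s h0 (by omega)
      calc ∑ t ∈ Finset.range (q+1), Zc k p s * Zc k q t * (((s:ℝ)*(t:ℝ)) / ((k:ℝ)+s+t))
          = (Zc k p s * s) * ∑ t ∈ Finset.range (q+1), Zc k q t * ((t:ℝ)/((k:ℝ)+s+t)) := by
            rw [Finset.mul_sum]
            apply Finset.sum_congr rfl
            intro t _
            ring
        _ = Zc k p s * s := by rw [hk]; ring
  rw [Finset.sum_congr rfl hinner, sum_Zc_mul]

lemma radial_sum (k p q : ℕ) :
    ∑ s ∈ Finset.range (p+1), ∑ t ∈ Finset.range (q+1), Zc k p s * Zc k q t *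
      ((((k+2*s)*(k+2*t) + k^2 : ℕ) : ℝ) / (2*((k:ℝ)+(s:ℝ)+(t:ℝ))))
    = 2 * ((min p q : ℕ) : ℝ) * (((min p q : ℕ) : ℝ) + k + 1) + k := by
  have hterm : ∀ s t : ℕ, (((k+2*s)*(k+2*t) + k^2 : ℕ) : ℝ) / (2*((k:ℝ)+s+t))
      = (k:ℝ) + 2 * (((s:ℝ)*(t:ℝ)) / ((k:ℝ)+s+t)) := by
    intro s t
    rcases Nat.eq_zero_or_pos (k+s+t) with h0 | h0
    · have hk : k = 0 := by omega
      have hs : s = 0 := by omega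
      have ht : t = 0 := by omega
      subst hk; subst hs; subst ht; norm_num
    · have hd : ((k:ℝ)+(s:ℝ)+(t:ℝ)) ≠ 0 := by
        have h1 : (0:ℝ) < (k:ℝ)+(s:ℝ)+(t:ℝ) := by exact_mod_cast h0
        linarith
      field_simp
      push_cast
      ring
  have hmain : ∑ s ∈ Finset.range (p+1), ∑ t ∈ Finset.range (q+1), Zc k p s * Zc k q t *
      ((((k+2*s)*(k+2*t) + k^2 : ℕ) : ℝ) / (2*((k:ℝ)+(s:ℝ)+(t:ℝ))))
      = (∑ s ∈ Finset.range (p+1), ∑ t ∈ Finset.range (q+1), Zc k p s * Zc k q t * (k:ℝ))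
        + 2 * ∑ s ∈ Finset.range (p+1), ∑ t ∈ Finset.range (q+1),
            Zc k p s * Zc k q t * (((s:ℝ)*(t:ℝ)) / ((k:ℝ)+s+t)) := by
    rw [Finset.mul_sum, ← Finset.sum_add_distrib]
    apply Finset.sum_congr rfl
    intro s _
    rw [Finset.mul_sum, ← Finset.sum_add_distrib]
    apply Finset.sum_congr rfl
    intro t _
    rw [hterm s t]
    ring
  rw [hmain]
  have hA : (∑ s ∈ Finset.range (p+1), ∑ t ∈ Finset.range (q+1),
      Zc k p s * Zc k q t * (k:ℝ)) = (k:ℝ) := by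
    have h1 : ∀ s ∈ Finset.range (p+1), ∑ t ∈ Finset.range (q+1), Zc k p s * Zc k q t * (k:ℝ)
        = Zc k p s * ((k:ℝ) * ∑ t ∈ Finset.range (q+1), Zc k q t) := by
      intro s _
      rw [Finset.mul_sum, Finset.mul_sum]
      apply Finset.sum_congr rfl
      intro t _
      ring
    rw [Finset.sum_congr rfl h1, ← Finset.sum_mul, sum_Zc, sum_Zc]
    ring
  rw [hA]
  have hB : (∑ s ∈ Finset.range (p+1), ∑ t ∈ Finset.range (q+1),
      Zc k p s * Zc k q t * (((s:ℝ)*(t:ℝ)) / ((k:ℝ)+s+t)))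
      = ((min p q : ℕ) : ℝ) * (((min p q : ℕ) : ℝ) + k + 1) := by
    rcases le_total p q with h | h
    · rw [Tsum_le k p q h, min_eq_left h]
    · rw [Finset.sum_comm]
      have h2 : ∀ t ∈ Finset.range (q+1), ∀ s ∈ Finset.range (p+1),
          Zc k p s * Zc k q t * (((s:ℝ)*(t:ℝ)) / ((k:ℝ)+s+t))
          = Zc k q t * Zc k p s * (((t:ℝ)*(s:ℝ)) / ((k:ℝ)+t+s)) := by
        intro t _ s _
        ring_nf
      rw [Finset.sum_congr rfl (fun t ht => Finset.sum_congr rfl (h2 t ht))]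
      rw [Tsum_le k q p h, min_eq_right h]
  rw [hB]
  ring

noncomputable def rad (k n : ℕ) (ρ : ℝ) : ℝ :=
  ∑ s ∈ Finset.range (n+1), Zc k n s * ρ^(k+2*s)

noncomputable def drad (k n : ℕ) (ρ : ℝ) : ℝ :=
  ∑ s ∈ Finset.range (n+1), Zc k n s * (((k+2*s : ℕ):ℝ) * ρ^(k+2*s-1))

lemma rad_hasDeriv (k n : ℕ) (ρ : ℝ) : HasDerivAt (rad k n) (drad k n ρ) ρ := by
  unfold rad drad
  apply HasDerivAt.fun_sum
  intro s _
  exact (hasDerivAt_pow (k+2*s) ρ).const_mul (Zc k n s)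

lemma zernike_eq (m : ℤ) (n : ℕ) (ρ θ : ℝ) :
    zernike m n ρ θ = ((Real.sqrt (1 + m.natAbs + 2 * n) * rad m.natAbs n ρ : ℝ) : ℂ)
      * Complex.exp (Complex.I * m * θ) := by
  have hreal : jacobiP n m.natAbs (2*ρ^2 - 1) * ρ^(m.natAbs) = rad m.natAbs n ρ := by
    rw [jacobi_monomial n m.natAbs (ρ^2), rad, Finset.sum_mul]
    apply Finset.sum_congr rfl
    intro s _
    rw [← pow_mul, mul_assoc, ← pow_add]
    congr 2
    omega
  unfold zernike
  rw [← hreal]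
  push_cast
  ring

lemma deriv_rho (m : ℤ) (n : ℕ) (θ ρ : ℝ) :
    deriv (fun r => zernike m n r θ) ρ
      = ((Real.sqrt (1 + m.natAbs + 2 * n) * drad m.natAbs n ρ : ℝ) : ℂ)
        * Complex.exp (Complex.I * m * θ) := by
  have h : (fun r => zernike m n r θ)
      = fun r => ((Real.sqrt (1 + m.natAbs + 2 * n) * rad m.natAbs n r : ℝ) : ℂ)
          * Complex.exp (Complex.I * m * θ) := funext fun r => zernike_eq m n r θ
  rw [h]
  exact ((((rad_hasDeriv m.natAbs n ρ).const_mul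
    (Real.sqrt (1 + m.natAbs + 2 * n))).ofReal_comp).mul_const _).deriv

lemma deriv_theta (m : ℤ) (n : ℕ) (ρ θ : ℝ) :
    deriv (fun t => zernike m n ρ t) θ
      = ((Real.sqrt (1 + m.natAbs + 2 * n) * rad m.natAbs n ρ : ℝ) : ℂ)
        * (Complex.I * m) * Complex.exp (Complex.I * m * θ) := by
  have h : (fun t => zernike m n ρ t)
      = fun t : ℝ => ((Real.sqrt (1 + m.natAbs + 2 * n) * rad m.natAbs n ρ : ℝ) : ℂ)
          * Complex.exp (Complex.I * m * (t:ℝ)) := funext fun t => zernike_eq m n ρ t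
  rw [h]
  have h1 : HasDerivAt (fun t : ℝ => ((t : ℝ) : ℂ)) 1 θ := (hasDerivAt_id θ).ofReal_comp
  have h2 := h1.const_mul (Complex.I * (m:ℂ))
  have h3 := h2.cexp
  have h4 := h3.const_mul
    (((Real.sqrt (1 + m.natAbs + 2 * n) * rad m.natAbs n ρ : ℝ) : ℂ))
  rw [h4.deriv]
  push_cast
  ring

lemma integrand_eq (m : ℤ) (n' n : ℕ) (θ ρ : ℝ) :
    ((starRingEnd ℂ) (deriv (fun r => zernike m n' r θ) ρ)
        * deriv (fun r => zernike m n r θ) ρ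
      + ((ρ : ℂ)⁻¹) ^ 2 * (starRingEnd ℂ) (deriv (fun t => zernike m n' ρ t) θ)
        * deriv (fun t => zernike m n ρ t) θ) * (ρ : ℂ)
    = (((Real.sqrt (1 + m.natAbs + 2 * n') * Real.sqrt (1 + m.natAbs + 2 * n)) *
        ((drad m.natAbs n' ρ * drad m.natAbs n ρ
          + (ρ⁻¹)^2 * ((m.natAbs : ℝ))^2 * (rad m.natAbs n' ρ * rad m.natAbs n ρ)) * ρ) : ℝ) : ℂ) := by
  rw [deriv_rho, deriv_rho, deriv_theta, deriv_theta]
  set E := Complex.exp (Complex.I * m * θ) with hE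
  have hFE : (starRingEnd ℂ) E * E = 1 := by
    rw [hE, ← Complex.exp_conj, ← Complex.exp_add]
    rw [show (starRingEnd ℂ) (Complex.I * m * θ) + Complex.I * m * θ = 0 by
      simp only [map_mul, Complex.conj_I, Complex.conj_ofReal, map_intCast]; ring]
    exact Complex.exp_zero
  have hm2 : ((m:ℂ)) * m = ((m.natAbs : ℕ):ℂ) * ((m.natAbs : ℕ):ℂ) := by
    rw [← Int.cast_mul, ← Int.natAbs_mul_self, Int.cast_natCast, Nat.cast_mul]
  simp only [map_mul, Complex.conj_ofReal, Complex.conj_I, map_intCast]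
  push_cast
  linear_combination
    ((ρ:ℂ) * (((Real.sqrt (1 + m.natAbs + 2 * n') : ℝ):ℂ) * ((drad m.natAbs n' ρ : ℝ):ℂ))
        * (((Real.sqrt (1 + m.natAbs + 2 * n) : ℝ):ℂ) * ((drad m.natAbs n ρ : ℝ):ℂ))
      - (ρ:ℂ) * ((ρ:ℂ)⁻¹)^2
        * (((Real.sqrt (1 + m.natAbs + 2 * n') : ℝ):ℂ) * ((rad m.natAbs n' ρ : ℝ):ℂ))
        * (((Real.sqrt (1 + m.natAbs + 2 * n) : ℝ):ℂ) * ((rad m.natAbs n ρ : ℝ):ℂ))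
        * (m:ℂ)^2 * Complex.I^2) * hFE
    + (-(ρ:ℂ) * ((ρ:ℂ)⁻¹)^2
        * (((Real.sqrt (1 + m.natAbs + 2 * n') : ℝ):ℂ) * ((rad m.natAbs n' ρ : ℝ):ℂ))
        * (((Real.sqrt (1 + m.natAbs + 2 * n) : ℝ):ℂ) * ((rad m.natAbs n ρ : ℝ):ℂ))
        * (m:ℂ)^2) * Complex.I_mul_I
    + ((ρ:ℂ) * ((ρ:ℂ)⁻¹)^2
        * (((Real.sqrt (1 + m.natAbs + 2 * n') : ℝ):ℂ) * ((rad m.natAbs n' ρ : ℝ):ℂ))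
        * (((Real.sqrt (1 + m.natAbs + 2 * n) : ℝ):ℂ) * ((rad m.natAbs n ρ : ℝ):ℂ))) * hm2

lemma term_eq (k s t : ℕ) (a b ρ : ℝ) :
    (a * (((k+2*s : ℕ):ℝ) * ρ^(k+2*s-1))) * (b * (((k+2*t : ℕ):ℝ) * ρ^(k+2*t-1))) * ρ
      + (ρ⁻¹)^2 * (k:ℝ)^2 * ((a * ρ^(k+2*s)) * (b * ρ^(k+2*t))) * ρ
    = a * b * ((((k+2*s)*(k+2*t) + k^2 : ℕ):ℝ) * ρ^(2*(k+s+t)-1)) := by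
  rcases eq_or_ne ρ 0 with hρ | hρ
  · subst hρ
    rcases Nat.eq_zero_or_pos (k+s+t) with h0 | h0
    · have hk : k = 0 := by omega
      have hs : s = 0 := by omega
      have ht : t = 0 := by omega
      subst hk; subst hs; subst ht
      norm_num
    · rw [zero_pow (by omega : 2*(k+s+t)-1 ≠ 0)]
      ring
  · rcases Nat.eq_zero_or_pos (k+2*s) with hks | hks
    · have hk : k = 0 := by omega
      have hs : s = 0 := by omega
      subst hk; subst hs
      norm_num
    · rcases Nat.eq_zero_or_pos (k+2*t) with hkt | hkt
      · have hk : k = 0 := by omega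
        have ht : t = 0 := by omega
        subst hk; subst ht
        norm_num
      · have key : ρ^(k+2*s-1) * ρ^(k+2*t-1) * ρ = ρ^(2*(k+s+t)-1) := by
          rw [← pow_add, ← pow_succ]
          congr 1
          omega
        have key2 : (ρ⁻¹)^2 * (ρ^(k+2*s) * ρ^(k+2*t)) * ρ = ρ^(2*(k+s+t)-1) := by
          rw [← pow_add, show (k+2*s)+(k+2*t) = (2*(k+s+t)-1) + 1 by omega, pow_succ,
            show (2*(k+s+t)-1) = (2*(k+s+t)-2) + 1 by omega, pow_succ]
          field_simp
          ring
        calc (a * (((k+2*s : ℕ):ℝ) * ρ^(k+2*s-1))) * (b * (((k+2*t : ℕ):ℝ) * ρ^(k+2*t-1))) * ρ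
              + (ρ⁻¹)^2 * (k:ℝ)^2 * ((a * ρ^(k+2*s)) * (b * ρ^(k+2*t))) * ρ
            = (a * b * (((k+2*s : ℕ):ℝ) * ((k+2*t : ℕ):ℝ)))
                * (ρ^(k+2*s-1) * ρ^(k+2*t-1) * ρ)
              + (a * b * (k:ℝ)^2) * ((ρ⁻¹)^2 * (ρ^(k+2*s) * ρ^(k+2*t)) * ρ) := by ring
          _ = a * b * ((((k+2*s)*(k+2*t) + k^2 : ℕ):ℝ) * ρ^(2*(k+s+t)-1)) := by
              rw [key, key2]
              push_cast
              ring

lemma W_eq (k p q : ℕ) (ρ : ℝ) :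
    (drad k p ρ * drad k q ρ + (ρ⁻¹)^2 * (k:ℝ)^2 * (rad k p ρ * rad k q ρ)) * ρ
    = ∑ s ∈ Finset.range (p+1), ∑ t ∈ Finset.range (q+1),
        Zc k p s * Zc k q t * ((((k+2*s)*(k+2*t) + k^2 : ℕ):ℝ) * ρ^(2*(k+s+t)-1)) := by
  unfold rad drad
  rw [Finset.sum_mul_sum, Finset.sum_mul_sum]
  rw [Finset.mul_sum, add_mul, Finset.sum_mul, Finset.sum_mul, ← Finset.sum_add_distrib]
  apply Finset.sum_congr rfl
  intro s _
  rw [Finset.mul_sum, Finset.sum_mul, Finset.sum_mul, ← Finset.sum_add_distrib]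
  apply Finset.sum_congr rfl
  intro t _
  have := term_eq k s t (Zc k p s) (Zc k q t) ρ
  calc (Zc k p s * (((k+2*s : ℕ):ℝ) * ρ^(k+2*s-1))) * (Zc k q t * (((k+2*t : ℕ):ℝ) * ρ^(k+2*t-1))) * ρ
        + (ρ⁻¹)^2 * (k:ℝ)^2 * ((Zc k p s * ρ^(k+2*s)) * (Zc k q t * ρ^(k+2*t))) * ρ
      = Zc k p s * Zc k q t * ((((k+2*s)*(k+2*t) + k^2 : ℕ):ℝ) * ρ^(2*(k+s+t)-1)) := this

lemma integral_W (k p q : ℕ) :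
    (∫ ρ in (0:ℝ)..1,
      (drad k p ρ * drad k q ρ + (ρ⁻¹)^2 * (k:ℝ)^2 * (rad k p ρ * rad k q ρ)) * ρ)
    = 2 * ((min p q : ℕ) : ℝ) * (((min p q : ℕ) : ℝ) + k + 1) + k := by
  rw [intervalIntegral.integral_congr (g := fun ρ =>
      ∑ s ∈ Finset.range (p+1), ∑ t ∈ Finset.range (q+1),
        Zc k p s * Zc k q t * ((((k+2*s)*(k+2*t) + k^2 : ℕ):ℝ) * ρ^(2*(k+s+t)-1)))
    (fun ρ _ => W_eq k p q ρ)]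
  rw [intervalIntegral.integral_finset_sum (fun s _ => by
    apply Continuous.intervalIntegrable
    fun_prop)]
  rw [← radial_sum k p q]
  apply Finset.sum_congr rfl
  intro s _
  rw [intervalIntegral.integral_finset_sum (fun t _ => by
    apply Continuous.intervalIntegrable
    fun_prop)]
  apply Finset.sum_congr rfl
  intro t _
  rw [intervalIntegral.integral_const_mul, intervalIntegral.integral_const_mul,
    integral_pow]
  rcases Nat.eq_zero_or_pos (k+s+t) with h0 | h0
  · have hk : k = 0 := by omega
    have hs : s = 0 := by omega
    have ht : t = 0 := by omega
    subst hk; subst hs; subst ht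
    norm_num
  · have h2 : ((2*(k+s+t)-1 : ℕ) : ℝ) + 1 = 2*((k:ℝ)+s+t) := by
      have h3 : ((2*(k+s+t)-1 : ℕ) : ℝ) + 1 = (((2*(k+s+t)-1) + 1 : ℕ) : ℝ) := by push_cast; ring
      rw [h3, show (2*(k+s+t)-1) + 1 = 2*(k+s+t) by omega]
      push_cast; ring
    rw [zero_pow (by omega : 2*(k+s+t)-1+1 ≠ 0), one_pow, h2]
    ring

/-- the stiffness matrix entries
A(m)_{n'n} = (1/π)∫₀^{2π}∫₀¹ conj(∇_H ζ_{mn'})·∇_H ζ_{mn} ρ dρ dθ equal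
2 μ_{mn'} μ_{mn} [2γ(γ+|m|+1) + |m|] with γ = min(n',n). -/
theorem zernike_stiffness_entries (m : ℤ) (n' n : ℕ) :
    (1 / (Real.pi : ℂ)) * ∫ θ in (0:ℝ)..(2 * Real.pi), ∫ ρ in (0:ℝ)..1,
        ((starRingEnd ℂ) (deriv (fun r => zernike m n' r θ) ρ)
            * deriv (fun r => zernike m n r θ) ρ
          + ((ρ : ℂ)⁻¹) ^ 2 * (starRingEnd ℂ) (deriv (fun t => zernike m n' ρ t) θ)
            * deriv (fun t => zernike m n ρ t) θ) * (ρ : ℂ)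
      = ((2 * Real.sqrt (1 + m.natAbs + 2 * n') * Real.sqrt (1 + m.natAbs + 2 * n)
          * (2 * (min n' n : ℕ) * ((min n' n : ℕ) + m.natAbs + 1) + m.natAbs) : ℝ) : ℂ) := by
  have hV := integral_W m.natAbs n' n
  have hinner : ∀ θ : ℝ, (∫ ρ in (0:ℝ)..1,
      ((starRingEnd ℂ) (deriv (fun r => zernike m n' r θ) ρ)
          * deriv (fun r => zernike m n r θ) ρ
        + ((ρ : ℂ)⁻¹) ^ 2 * (starRingEnd ℂ) (deriv (fun t => zernike m n' ρ t) θ)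
          * deriv (fun t => zernike m n ρ t) θ) * (ρ : ℂ))
      = (((Real.sqrt (1 + m.natAbs + 2 * n') * Real.sqrt (1 + m.natAbs + 2 * n)) *
          (2 * ((min n' n : ℕ) : ℝ) * (((min n' n : ℕ) : ℝ) + m.natAbs + 1) + m.natAbs) : ℝ) : ℂ) := by
    intro θ
    rw [intervalIntegral.integral_congr (fun ρ _ => integrand_eq m n' n θ ρ)]
    rw [intervalIntegral.integral_ofReal]
    rw [intervalIntegral.integral_const_mul, hV]
  rw [intervalIntegral.integral_congr (fun θ _ => hinner θ)]
  rw [intervalIntegral.integral_const, sub_zero, real_smul]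
  push_cast
  have hpi : (Real.pi : ℂ) ≠ 0 := by
    exact_mod_cast Real.pi_ne_zero
  field_simp
end
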